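/- Let N and r be positive integers with 2r < N, let n be a positive integer with N² ≤ 2^n, let q be a nonnegative integer, and let y and s be integers with 1 ≤ s ≤ r−1. If |y − s·2^{n+q}/r| ≤ 2^{1+q}, then |y/2^{n+q} − s/r| < 1/(2r²). -/

import Mathlib

theorem stmt_5 (N r n q : ℕ) (hN : 0 < N) (hr : 0 < r) (h2r : 2 * r < N)
    (hn : 0 < n) (hN2 : N ^ 2 ≤ 2 ^ n) (y s : ℤ) (hs1 : 1 ≤ s) (hs2 : s ≤ (r : ℤ) - 1)
    (h : |(y : ℝ) - (s : ℝ) * 2 ^ (n + q) / r| ≤ 2 ^ (1 + q)) :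
    |(y : ℝ) / 2 ^ (n + q) - (s : ℝ) / r| < 1 / (2 * (r : ℝ) ^ 2) := by
  have hr' : (0:ℝ) < r := by exact_mod_cast hr
  have hP : (0:ℝ) < 2 ^ (n + q) := by positivity
  have e : (y : ℝ) / 2 ^ (n + q) - (s : ℝ) / r
      = ((y : ℝ) - (s : ℝ) * 2 ^ (n + q) / r) / 2 ^ (n + q) := by
    field_simp
  rw [e, abs_div, abs_of_pos hP]
  have h4 : (4:ℝ) * r ^ 2 < 2 ^ n := by
    have h1 : (2 * r) ^ 2 < N ^ 2 := by
      apply Nat.pow_lt_pow_left h2r; norm_num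
    have : (2 * r) ^ 2 < 2 ^ n := lt_of_lt_of_le h1 hN2
    have := (Nat.cast_lt (α := ℝ)).2 this
    push_cast at this
    nlinarith
  have hbound : (2:ℝ) ^ (1 + q) / 2 ^ (n + q) < 1 / (2 * (r:ℝ) ^ 2) := by
    rw [div_lt_div_iff₀ hP (by positivity)]
    have : (2:ℝ) ^ (1 + q) * (2 * r ^ 2) = 4 * r ^ 2 * 2 ^ q := by
      rw [pow_add]; ring
    rw [this, pow_add]
    have hq : (0:ℝ) < 2 ^ q := by positivity
    calc 4 * (r:ℝ) ^ 2 * 2 ^ q < 2 ^ n * 2 ^ q := by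
          exact mul_lt_mul_of_pos_right h4 hq
      _ ≤ 1 * (2 ^ n * 2 ^ q) := by rw [one_mul]
  calc |(y : ℝ) - (s : ℝ) * 2 ^ (n + q) / r| / 2 ^ (n + q)
      ≤ 2 ^ (1 + q) / 2 ^ (n + q) := by
        gcongr
    _ < 1 / (2 * (r:ℝ) ^ 2) := hbound
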